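/- Let V₂⊗V₂ carry the action of pairs of 2×2 matrices via ρ₂⊗ρ₂. Then (i) the subspace of V₂⊗V₂ fixed by ρ₂(diag(λ, λ̄))⊗ρ₂(diag(λ, λ̄)) for all complex λ with |λ| = 1 equals the 3-dimensional span of z₀²⊗z₁², z₀z₁⊗z₀z₁, and z₁²⊗z₀²; and (ii) the subspace fixed by all these torus elements and additionally by ρ₂(J)⊗ρ₂(K), where J := [[0,1],[−1,0]] and K := [[0,i],[i,0]], equals the 2-dimensional span of z₀²⊗z₁² − z₁²⊗z₀² and z₀z₁⊗z₀z₁. -/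

import Mathlib

/-!
STATEMENT 16: In V₂⊗V₂ under ρ₂⊗ρ₂: (i) the vectors fixed by
ρ₂(diag(λ,λ̄))⊗ρ₂(diag(λ,λ̄)) for all |λ| = 1 form the 3-dimensional span of
z₀²⊗z₁², z₀z₁⊗z₀z₁, z₁²⊗z₀²; (ii) adding the element ρ₂(J)⊗ρ₂(K) cuts this
down to the 2-dimensional span of z₀²⊗z₁² − z₁²⊗z₀² and z₀z₁⊗z₀z₁.
-/

open MvPolynomial TensorProduct

noncomputable section

abbrev Mat2 : Type := Matrix (Fin 2) (Fin 2) ℂ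

abbrev P2 : Type := MvPolynomial (Fin 2) ℂ

/-- The substitution action `(ρ(g) f)(z₀,z₁) = f((z₀,z₁)g)`. -/
def polyAct (g : Mat2) : P2 →ₗ[ℂ] P2 :=
  (MvPolynomial.aeval
    (fun j : Fin 2 => ∑ i : Fin 2, MvPolynomial.C (g i j) * MvPolynomial.X i) :
      P2 →ₐ[ℂ] P2).toLinearMap

/-- The action ρ_l(A)⊗ρ_m(B) on V_l⊗V_m ⊆ P2 ⊗ P2. -/
def tAct (g h : Mat2) : P2 ⊗[ℂ] P2 →ₗ[ℂ] P2 ⊗[ℂ] P2 :=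
  TensorProduct.map (polyAct g) (polyAct h)

def Jmat : Mat2 := !![0, 1; -1, 0]
def Kmat : Mat2 := !![0, Complex.I; Complex.I, 0]

/-- The torus element diag(λ, λ̄). -/
def dmat (lam : ℂ) : Mat2 := !![lam, 0; 0, (starRingEnd ℂ) lam]

/-- The copy of V₂⊗V₂ inside P2 ⊗ P2. -/
def V22 : Submodule ℂ (P2 ⊗[ℂ] P2) :=
  LinearMap.range (TensorProduct.map
    (MvPolynomial.homogeneousSubmodule (Fin 2) ℂ 2).subtype
    (MvPolynomial.homogeneousSubmodule (Fin 2) ℂ 2).subtype)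

def u1 : P2 ⊗[ℂ] P2 := (X 0 ^ 2 : P2) ⊗ₜ[ℂ] (X 1 ^ 2 : P2)
def u2 : P2 ⊗[ℂ] P2 := (X 0 * X 1 : P2) ⊗ₜ[ℂ] (X 0 * X 1 : P2)
def u3 : P2 ⊗[ℂ] P2 := (X 1 ^ 2 : P2) ⊗ₜ[ℂ] (X 0 ^ 2 : P2)

namespace St16

/-! ### Action computations -/

lemma pD0 (l : ℂ) : polyAct (dmat l) (X 0 ^ 2) = (l ^ 2) • (X 0 ^ 2 : P2) := by
  simp [polyAct, dmat, Fin.sum_univ_two, smul_eq_C_mul]; ring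

lemma pD1 (l : ℂ) : polyAct (dmat l) (X 0 * X 1)
    = (l * (starRingEnd ℂ) l) • (X 0 * X 1 : P2) := by
  simp [polyAct, dmat, Fin.sum_univ_two, smul_eq_C_mul]; ring

lemma pD2 (l : ℂ) : polyAct (dmat l) (X 1 ^ 2) = ((starRingEnd ℂ) l ^ 2) • (X 1 ^ 2 : P2) := by
  simp [polyAct, dmat, Fin.sum_univ_two, smul_eq_C_mul]; ring

lemma pJ0 : polyAct Jmat (X 0 ^ 2) = (X 1 ^ 2 : P2) := by
  simp [polyAct, Jmat, Fin.sum_univ_two]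

lemma pJ1 : polyAct Jmat (X 0 * X 1) = -(X 0 * X 1 : P2) := by
  simp [polyAct, Jmat, Fin.sum_univ_two]; ring

lemma pJ2 : polyAct Jmat (X 1 ^ 2) = (X 0 ^ 2 : P2) := by
  simp [polyAct, Jmat, Fin.sum_univ_two]

lemma pK0 : polyAct Kmat (X 0 ^ 2) = -(X 1 ^ 2 : P2) := by
  simp [polyAct, Kmat, Fin.sum_univ_two]
  rw [mul_pow, ← C_pow, Complex.I_sq, map_neg, map_one]; ring

lemma pK1 : polyAct Kmat (X 0 * X 1) = -(X 0 * X 1 : P2) := by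
  simp [polyAct, Kmat, Fin.sum_univ_two]
  rw [show ((C Complex.I * X 1) * (C Complex.I * X 0) : P2)
      = C (Complex.I ^ 2) * (X 0 * X 1) by rw [C_pow]; ring,
    Complex.I_sq, map_neg, map_one]; ring

lemma pK2 : polyAct Kmat (X 1 ^ 2) = -(X 0 ^ 2 : P2) := by
  simp [polyAct, Kmat, Fin.sum_univ_two]
  rw [mul_pow, ← C_pow, Complex.I_sq, map_neg, map_one]; ring

lemma tss (a b : ℂ) (p q : P2) : (a • p) ⊗ₜ[ℂ] (b • q) = (a * b) • (p ⊗ₜ[ℂ] q) := by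
  rw [TensorProduct.tmul_smul, TensorProduct.smul_tmul', smul_smul, mul_comm b a,
    ← TensorProduct.smul_tmul']

lemma deg2 (d : Fin 2 →₀ ℕ) : d.degree = d 0 + d 1 := by
  rw [Finsupp.degree, ← Fin.sum_univ_two (f := fun i => d i)]
  exact Finset.sum_subset (Finset.subset_univ _)
    (fun i _ hi => Finsupp.notMem_support_iff.mp hi)

/-! ### The nine monomial tensors -/

def m : Fin 3 → P2 := ![X 0 ^ 2, X 0 * X 1, X 1 ^ 2]

def S9 : Set (P2 ⊗[ℂ] P2) := {t | ∃ i j : Fin 3, m i ⊗ₜ[ℂ] m j = t}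

lemma homog_mem_span (p : P2) (hp : p ∈ MvPolynomial.homogeneousSubmodule (Fin 2) ℂ 2) :
    p ∈ Submodule.span ℂ (Set.range m) := by
  rw [mem_homogeneousSubmodule] at hp
  rw [← support_sum_monomial_coeff p]
  refine Submodule.sum_mem _ fun d hd => ?_
  have hc : coeff d p ≠ 0 := (mem_support_iff).mp hd
  have hdeg : d.degree = 2 := by
    by_contra h
    exact hc (hp.coeff_eq_zero h)
  have hsum : d 0 + d 1 = 2 := by rw [deg2] at hdeg; exact hdeg
  have hdrep : d = Finsupp.single 0 (d 0) + Finsupp.single 1 (d 1) := by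
    ext i; fin_cases i <;> simp
  have : (monomial d (coeff d p) : P2) = coeff d p • monomial d 1 := by
    rw [smul_monomial, smul_eq_mul, mul_one]
  rw [this]
  refine Submodule.smul_mem _ _ (Submodule.subset_span ?_)
  have h3 : d 0 = 2 ∧ d 1 = 0 ∨ d 0 = 1 ∧ d 1 = 1 ∨ d 0 = 0 ∧ d 1 = 2 := by omega
  rcases h3 with ⟨h0, h1⟩ | ⟨h0, h1⟩ | ⟨h0, h1⟩
  · refine ⟨0, ?_⟩
    rw [hdrep, h0, h1, Finsupp.single_zero, add_zero]
    simp [m, X_pow_eq_monomial]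
  · refine ⟨1, ?_⟩
    rw [hdrep, h0, h1]
    simp [m, X, monomial_mul]
  · refine ⟨2, ?_⟩
    rw [hdrep, h0, h1, Finsupp.single_zero, zero_add]
    simp [m, X_pow_eq_monomial]

lemma tmul_mem_span {p q : P2} (hx : p ∈ Submodule.span ℂ (Set.range m))
    (hy : q ∈ Submodule.span ℂ (Set.range m)) :
    p ⊗ₜ[ℂ] q ∈ Submodule.span ℂ S9 := by
  induction hx using Submodule.span_induction with
  | mem a ha =>
    induction hy using Submodule.span_induction with
    | mem b hb =>
      obtain ⟨i, rfl⟩ := ha; obtain ⟨j, rfl⟩ := hb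
      exact Submodule.subset_span ⟨i, j, rfl⟩
    | zero => rw [tmul_zero]; exact Submodule.zero_mem _
    | add b c _ _ hb hc => rw [tmul_add]; exact Submodule.add_mem _ hb hc
    | smul r b _ hb => rw [tmul_smul]; exact Submodule.smul_mem _ _ hb
  | zero => rw [zero_tmul]; exact Submodule.zero_mem _
  | add a c _ _ ha hc => rw [add_tmul]; exact Submodule.add_mem _ ha hc
  | smul r a _ ha => rw [← TensorProduct.smul_tmul']; exact Submodule.smul_mem _ _ ha

lemma V22_le_span : V22 ≤ Submodule.span ℂ S9 := by
  rw [V22, TensorProduct.range_map_eq_span_tmul, Submodule.span_le]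
  rintro t ⟨x, y, rfl⟩
  exact tmul_mem_span (homog_mem_span x.1 x.2) (homog_mem_span y.1 y.2)

lemma homog2 (i : Fin 3) : m i ∈ MvPolynomial.homogeneousSubmodule (Fin 2) ℂ 2 := by
  rw [mem_homogeneousSubmodule]
  fin_cases i
  · simpa [m, X_pow_eq_monomial] using
      isHomogeneous_monomial (1 : ℂ)
        (show (Finsupp.single (0 : Fin 2) 2).degree = 2 by
          rw [deg2]; simp)
  · simpa [m, X, monomial_mul] using
      isHomogeneous_monomial (1 : ℂ)
        (show (Finsupp.single (0 : Fin 2) 1 + Finsupp.single (1 : Fin 2) 1).degree = 2 by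
          rw [deg2]; simp)
  · simpa [m, X_pow_eq_monomial] using
      isHomogeneous_monomial (1 : ℂ)
        (show (Finsupp.single (1 : Fin 2) 2).degree = 2 by
          rw [deg2]; simp)

lemma mem_V22 (i j : Fin 3) : m i ⊗ₜ[ℂ] m j ∈ V22 :=
  ⟨(⟨m i, homog2 i⟩ : MvPolynomial.homogeneousSubmodule (Fin 2) ℂ 2) ⊗ₜ[ℂ]
    (⟨m j, homog2 j⟩ : MvPolynomial.homogeneousSubmodule (Fin 2) ℂ 2), rfl⟩

/-! ### The special unit complex numbers and weights -/

def om : ℂ := ((Real.sqrt 2 / 2 : ℝ) : ℂ) * (1 + Complex.I)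

lemma om_sq : om ^ 2 = Complex.I := by
  have h : ((Real.sqrt 2 : ℝ) : ℂ) ^ 2 = 2 := by
    norm_cast
    exact Real.sq_sqrt (by norm_num)
  rw [om]
  push_cast
  linear_combination (Complex.I / 2) * h + (((Real.sqrt 2:ℝ):ℂ)^2/4) * Complex.I_sq

lemma om_abs : ‖om‖ = 1 := by
  have h2 : ‖om‖ ^ 2 = 1 := by
    rw [← norm_pow, om_sq, Complex.norm_I]
  nlinarith [norm_nonneg om, h2]

lemma om_mul_conj : om * (starRingEnd ℂ) om = 1 := by
  rw [Complex.mul_conj]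
  norm_cast
  rw [Complex.normSq_eq_norm_sq, om_abs]; norm_num

lemma om_conj_sq : ((starRingEnd ℂ) om) ^ 2 = -Complex.I := by
  rw [← map_pow, om_sq, Complex.conj_I]

def wt (l : ℂ) : Fin 3 → ℂ := ![l ^ 2, l * (starRingEnd ℂ) l, (starRingEnd ℂ) l ^ 2]

lemma tD (l : ℂ) (i j : Fin 3) :
    tAct (dmat l) (dmat l) (m i ⊗ₜ[ℂ] m j) = (wt l i * wt l j) • (m i ⊗ₜ[ℂ] m j) := by
  fin_cases i <;> fin_cases j <;>
    (simp [tAct, m, wt, pD0, pD1, pD2]; rw [← TensorProduct.smul_tmul', smul_smul]; try ring_nf)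

lemma wt_om : wt om = ![Complex.I, 1, -Complex.I] := by
  rw [wt, om_sq, om_mul_conj, om_conj_sq]

lemma wt_I : wt Complex.I = ![-1, 1, -1] := by
  rw [wt, Complex.conj_I, Complex.I_sq]
  norm_num [Complex.I_sq]

lemma wt_omI : wt (om * Complex.I) = ![-Complex.I, 1, Complex.I] := by
  rw [wt]
  funext k
  fin_cases k
  · show (om * Complex.I) ^ 2 = -Complex.I
    rw [mul_pow, om_sq, Complex.I_sq]; ring
  · show om * Complex.I * (starRingEnd ℂ) (om * Complex.I) = 1
    rw [map_mul, Complex.conj_I]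
    linear_combination (-(om * (starRingEnd ℂ) om)) * Complex.I_sq + om_mul_conj
  · show ((starRingEnd ℂ) (om * Complex.I)) ^ 2 = Complex.I
    rw [map_mul, Complex.conj_I, mul_pow, om_conj_sq, neg_sq, Complex.I_sq]; ring

lemma u1_eq : u1 = m 0 ⊗ₜ[ℂ] m 2 := rfl
lemma u2_eq : u2 = m 1 ⊗ₜ[ℂ] m 1 := rfl
lemma u3_eq : u3 = m 2 ⊗ₜ[ℂ] m 0 := rfl

/-! ### Averaging operators -/

def Pl : P2 ⊗[ℂ] P2 →ₗ[ℂ] P2 ⊗[ℂ] P2 :=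
  (4⁻¹ : ℂ) • (LinearMap.id + tAct (dmat om) (dmat om)
    + tAct (dmat Complex.I) (dmat Complex.I)
    + tAct (dmat (om * Complex.I)) (dmat (om * Complex.I)))

lemma Pl_fix {w : P2 ⊗[ℂ] P2}
    (h : ∀ lam : ℂ, ‖lam‖ = 1 → tAct (dmat lam) (dmat lam) w = w) :
    Pl w = w := by
  have h1 := h om om_abs
  have h2 := h Complex.I Complex.norm_I
  have h3 := h (om * Complex.I) (by rw [norm_mul, om_abs, Complex.norm_I, mul_one])
  simp only [Pl, LinearMap.smul_apply, LinearMap.add_apply, LinearMap.id_apply, h1, h2, h3]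
  module

lemma Pl_gen (i j : Fin 3) : Pl (m i ⊗ₜ[ℂ] m j) ∈ Submodule.span ℂ {u1, u2, u3} := by
  have e1 : Pl (m i ⊗ₜ[ℂ] m j) = (4⁻¹ * (1 + wt om i * wt om j
      + wt Complex.I i * wt Complex.I j
      + wt (om * Complex.I) i * wt (om * Complex.I) j)) • (m i ⊗ₜ[ℂ] m j) := by
    simp only [Pl, LinearMap.smul_apply, LinearMap.add_apply, LinearMap.id_apply, tD]
    module
  rw [e1, wt_om, wt_I, wt_omI]
  fin_cases i <;> fin_cases j <;>
    norm_num [Complex.I_mul_I] <;>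
    first
      | exact Submodule.zero_mem _
      | exact Submodule.smul_mem _ _ (Submodule.subset_span (by
          first
            | exact Or.inl u1_eq.symm
            | exact Or.inr (Or.inl u2_eq.symm)
            | exact Or.inr (Or.inr u3_eq.symm)))
      | exact Submodule.subset_span (by
          first
            | exact Or.inl u1_eq.symm
            | exact Or.inr (Or.inl u2_eq.symm)
            | exact Or.inr (Or.inr u3_eq.symm))

/-! ### Torus invariance of the generators -/

lemma fix_u {l : ℂ} (hl : ‖l‖ = 1) :
    tAct (dmat l) (dmat l) u1 = u1 ∧ tAct (dmat l) (dmat l) u2 = u2 ∧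
    tAct (dmat l) (dmat l) u3 = u3 := by
  have hlc : l * (starRingEnd ℂ) l = 1 := by
    rw [Complex.mul_conj]
    norm_cast
    rw [Complex.normSq_eq_norm_sq, hl]; norm_num
  have h02 : wt l 0 * wt l 2 = 1 := by
    show l ^ 2 * (starRingEnd ℂ) l ^ 2 = 1
    linear_combination (l * (starRingEnd ℂ) l + 1) * hlc
  have h11 : wt l 1 * wt l 1 = 1 := by
    show (l * (starRingEnd ℂ) l) * (l * (starRingEnd ℂ) l) = 1
    linear_combination (l * (starRingEnd ℂ) l + 1) * hlc
  have h20 : wt l 2 * wt l 0 = 1 := by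
    show (starRingEnd ℂ) l ^ 2 * l ^ 2 = 1
    linear_combination (l * (starRingEnd ℂ) l + 1) * hlc
  refine ⟨?_, ?_, ?_⟩
  · rw [u1_eq, tD, h02, one_smul]
  · rw [u2_eq, tD, h11, one_smul]
  · rw [u3_eq, tD, h20, one_smul]

/-! ### J/K action -/

lemma tJK_u1 : tAct Jmat Kmat u1 = -u3 := by
  rw [u1, tAct, TensorProduct.map_tmul, pJ0, pK2, TensorProduct.tmul_neg]; rfl

lemma tJK_u2 : tAct Jmat Kmat u2 = u2 := by
  rw [u2, tAct, TensorProduct.map_tmul, pJ1, pK1, TensorProduct.neg_tmul,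
    TensorProduct.tmul_neg, neg_neg]

lemma tJK_u3 : tAct Jmat Kmat u3 = -u1 := by
  rw [u3, tAct, TensorProduct.map_tmul, pJ2, pK0, TensorProduct.tmul_neg]; rfl

def Ql : P2 ⊗[ℂ] P2 →ₗ[ℂ] P2 ⊗[ℂ] P2 :=
  (2⁻¹ : ℂ) • (LinearMap.id + tAct Jmat Kmat)

lemma Ql_fix {w : P2 ⊗[ℂ] P2} (h : tAct Jmat Kmat w = w) : Ql w = w := by
  simp only [Ql, LinearMap.smul_apply, LinearMap.add_apply, LinearMap.id_apply, h]
  module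

lemma Ql_gen {t : P2 ⊗[ℂ] P2} (ht : t ∈ ({u1, u2, u3} : Set (P2 ⊗[ℂ] P2))) :
    Ql t ∈ Submodule.span ℂ ({u1 - u3, u2} : Set (P2 ⊗[ℂ] P2)) := by
  rcases ht with rfl | rfl | rfl
  · have : Ql u1 = (2⁻¹ : ℂ) • (u1 - u3) := by
      simp only [Ql, LinearMap.smul_apply, LinearMap.add_apply, LinearMap.id_apply, tJK_u1]
      module
    rw [this]
    exact Submodule.smul_mem _ _ (Submodule.subset_span (Or.inl rfl))
  · have : Ql u2 = u2 := by
      simp only [Ql, LinearMap.smul_apply, LinearMap.add_apply, LinearMap.id_apply, tJK_u2]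
      module
    rw [this]
    exact Submodule.subset_span (Or.inr rfl)
  · have : Ql u3 = (-(2⁻¹ : ℂ)) • (u1 - u3) := by
      simp only [Ql, LinearMap.smul_apply, LinearMap.add_apply, LinearMap.id_apply, tJK_u3]
      module
    rw [this]
    exact Submodule.smul_mem _ _ (Submodule.subset_span (Or.inl rfl))

/-! ### Linear independence and ranks -/

def d20 : Fin 2 →₀ ℕ := Finsupp.single 0 2
def d11 : Fin 2 →₀ ℕ := Finsupp.single 0 1 + Finsupp.single 1 1
def d02 : Fin 2 →₀ ℕ := Finsupp.single 1 2

def bT : Module.Basis ((Fin 2 →₀ ℕ) × (Fin 2 →₀ ℕ)) ℂ (P2 ⊗[ℂ] P2) :=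
  (MvPolynomial.basisMonomials (Fin 2) ℂ).tensorProduct
    (MvPolynomial.basisMonomials (Fin 2) ℂ)

lemma bT_u1 : bT (d20, d02) = u1 := by
  rw [bT, Module.Basis.tensorProduct_apply]
  simp [coe_basisMonomials, u1, d20, d02, X_pow_eq_monomial]

lemma bT_u2 : bT (d11, d11) = u2 := by
  rw [bT, Module.Basis.tensorProduct_apply]
  simp [coe_basisMonomials, u2, d11, X, monomial_mul]

lemma bT_u3 : bT (d02, d20) = u3 := by
  rw [bT, Module.Basis.tensorProduct_apply]
  simp [coe_basisMonomials, u3, d20, d02, X_pow_eq_monomial]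

def fIdx : Fin 3 → ((Fin 2 →₀ ℕ) × (Fin 2 →₀ ℕ)) := ![(d20, d02), (d11, d11), (d02, d20)]

lemma fIdx_inj : Function.Injective fIdx := by
  have hcomp : (fun p : ((Fin 2 →₀ ℕ) × (Fin 2 →₀ ℕ)) => p.1 0) ∘ fIdx = ![2, 1, 0] := by
    funext i
    fin_cases i <;> simp [fIdx, d20, d11, d02, Finsupp.single_apply]
  have : Function.Injective ((fun p : ((Fin 2 →₀ ℕ) × (Fin 2 →₀ ℕ)) => p.1 0) ∘ fIdx) := by
    rw [hcomp]
    decide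
  exact Function.Injective.of_comp this

lemma li3 : LinearIndependent ℂ ![u1, u2, u3] := by
  have h := bT.linearIndependent.comp fIdx fIdx_inj
  have he : (bT ∘ fIdx) = ![u1, u2, u3] := by
    funext i
    fin_cases i <;>
      simp only [Function.comp_apply, fIdx, Matrix.cons_val_zero, Matrix.cons_val_one,
        Matrix.head_cons] <;>
      first
        | exact bT_u1
        | exact bT_u2
        | exact bT_u3
  rwa [he] at h

lemma li2 : LinearIndependent ℂ ![u1 - u3, u2] := by
  rw [LinearIndependent.pair_iff]
  intro s t hst
  have h := Fintype.linearIndependent_iff.mp li3 ![s, t, -s] ?_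
  · exact ⟨h 0, h 1⟩
  · rw [Fin.sum_univ_three]
    simp only [Matrix.cons_val_zero, Matrix.cons_val_one, Matrix.head_cons,
      Matrix.cons_val_two, Matrix.tail_cons]
    rw [← hst]
    module

lemma range3 : Set.range ![u1, u2, u3] = ({u1, u2, u3} : Set (P2 ⊗[ℂ] P2)) := by
  ext x
  constructor
  · rintro ⟨i, rfl⟩
    fin_cases i
    · exact Or.inl rfl
    · exact Or.inr (Or.inl rfl)
    · exact Or.inr (Or.inr rfl)
  · rintro (rfl | rfl | rfl)
    exacts [⟨0, rfl⟩, ⟨1, rfl⟩, ⟨2, rfl⟩]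

lemma range2 : Set.range ![u1 - u3, u2] = ({u1 - u3, u2} : Set (P2 ⊗[ℂ] P2)) := by
  ext x
  constructor
  · rintro ⟨i, rfl⟩
    fin_cases i
    · exact Or.inl rfl
    · exact Or.inr rfl
  · rintro (rfl | rfl)
    exacts [⟨0, rfl⟩, ⟨1, rfl⟩]

lemma rank3 : Module.finrank ℂ ↥(Submodule.span ℂ ({u1, u2, u3} : Set (P2 ⊗[ℂ] P2))) = 3 := by
  rw [← range3, finrank_span_eq_card li3]
  rfl

lemma rank2 : Module.finrank ℂ
    ↥(Submodule.span ℂ ({u1 - u3, u2} : Set (P2 ⊗[ℂ] P2))) = 2 := by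
  rw [← range2, finrank_span_eq_card li2]
  rfl

/-! ### Main span facts -/

lemma span3_le_V22 : Submodule.span ℂ ({u1, u2, u3} : Set (P2 ⊗[ℂ] P2)) ≤ V22 := by
  rw [Submodule.span_le]
  rintro t (rfl | rfl | rfl)
  · exact mem_V22 0 2
  · exact mem_V22 1 1
  · exact mem_V22 2 0

lemma span3_fix {w : P2 ⊗[ℂ] P2}
    (hw : w ∈ Submodule.span ℂ ({u1, u2, u3} : Set (P2 ⊗[ℂ] P2)))
    {l : ℂ} (hl : ‖l‖ = 1) : tAct (dmat l) (dmat l) w = w := by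
  induction hw using Submodule.span_induction with
  | mem t ht =>
    rcases ht with rfl | rfl | rfl
    · exact (fix_u hl).1
    · exact (fix_u hl).2.1
    · exact (fix_u hl).2.2
  | zero => exact map_zero _
  | add a b _ _ ha hb => rw [map_add, ha, hb]
  | smul r a _ ha => rw [map_smul, ha]

lemma fwd1 {w : P2 ⊗[ℂ] P2} (hw : w ∈ V22)
    (hfix : ∀ lam : ℂ, ‖lam‖ = 1 → tAct (dmat lam) (dmat lam) w = w) :
    w ∈ Submodule.span ℂ ({u1, u2, u3} : Set (P2 ⊗[ℂ] P2)) := by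
  have hmap : Submodule.map Pl (Submodule.span ℂ S9)
      ≤ Submodule.span ℂ ({u1, u2, u3} : Set (P2 ⊗[ℂ] P2)) := by
    rw [Submodule.map_span, Submodule.span_le]
    rintro t ⟨s, ⟨i, j, rfl⟩, rfl⟩
    exact Pl_gen i j
  have : Pl w ∈ Submodule.map Pl (Submodule.span ℂ S9) :=
    Submodule.mem_map_of_mem (V22_le_span hw)
  rw [Pl_fix hfix] at this
  exact hmap this

lemma fwd2 {w : P2 ⊗[ℂ] P2}
    (hw : w ∈ Submodule.span ℂ ({u1, u2, u3} : Set (P2 ⊗[ℂ] P2)))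
    (hJK : tAct Jmat Kmat w = w) :
    w ∈ Submodule.span ℂ ({u1 - u3, u2} : Set (P2 ⊗[ℂ] P2)) := by
  have hmap : Submodule.map Ql (Submodule.span ℂ ({u1, u2, u3} : Set (P2 ⊗[ℂ] P2)))
      ≤ Submodule.span ℂ ({u1 - u3, u2} : Set (P2 ⊗[ℂ] P2)) := by
    rw [Submodule.map_span, Submodule.span_le]
    rintro t ⟨s, hs, rfl⟩
    exact Ql_gen hs
  have : Ql w ∈ _ := Submodule.mem_map_of_mem (f := Ql) hw
  rw [Ql_fix hJK] at this
  exact hmap this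

lemma span2_le_span3 : Submodule.span ℂ ({u1 - u3, u2} : Set (P2 ⊗[ℂ] P2))
    ≤ Submodule.span ℂ ({u1, u2, u3} : Set (P2 ⊗[ℂ] P2)) := by
  rw [Submodule.span_le]
  rintro t (rfl | rfl)
  · exact Submodule.sub_mem _ (Submodule.subset_span (Or.inl rfl))
      (Submodule.subset_span (Or.inr (Or.inr rfl)))
  · exact Submodule.subset_span (Or.inr (Or.inl rfl))

lemma span2_fixJK {w : P2 ⊗[ℂ] P2}
    (hw : w ∈ Submodule.span ℂ ({u1 - u3, u2} : Set (P2 ⊗[ℂ] P2))) :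
    tAct Jmat Kmat w = w := by
  induction hw using Submodule.span_induction with
  | mem t ht =>
    rcases ht with rfl | rfl
    · rw [map_sub, tJK_u1, tJK_u3]; ring_nf
    · exact tJK_u2
  | zero => exact map_zero _
  | add a b _ _ ha hb => rw [map_add, ha, hb]
  | smul r a _ ha => rw [map_smul, ha]

end St16

theorem statement16 :
    ({w : P2 ⊗[ℂ] P2 | w ∈ V22 ∧
        ∀ lam : ℂ, ‖lam‖ = 1 → tAct (dmat lam) (dmat lam) w = w}
      = ↑(Submodule.span ℂ {u1, u2, u3})) ∧
    Module.finrank ℂ ↥(Submodule.span ℂ {u1, u2, u3}) = 3 ∧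
    ({w : P2 ⊗[ℂ] P2 | w ∈ V22 ∧
        (∀ lam : ℂ, ‖lam‖ = 1 → tAct (dmat lam) (dmat lam) w = w) ∧
        tAct Jmat Kmat w = w}
      = ↑(Submodule.span ℂ {u1 - u3, u2})) ∧
    Module.finrank ℂ ↥(Submodule.span ℂ {u1 - u3, u2}) = 2 := by
  refine ⟨?_, St16.rank3, ?_, St16.rank2⟩
  · ext w
    constructor
    · rintro ⟨hw, hfix⟩
      exact St16.fwd1 hw hfix
    · intro hw
      exact ⟨St16.span3_le_V22 hw, fun l hl => St16.span3_fix hw hl⟩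
  · ext w
    constructor
    · rintro ⟨hw, hfix, hJK⟩
      exact St16.fwd2 (St16.fwd1 hw hfix) hJK
    · intro hw
      have h3 := St16.span2_le_span3 hw
      exact ⟨St16.span3_le_V22 h3, fun l hl => St16.span3_fix h3 hl,
        St16.span2_fixJK hw⟩


end
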